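/- Let (X,d) be a compact metric space, A ⊂ X a closed subset, ε > 0, and n ≥ 0 an integer. If widim_ε(A,d) ≤ n, then there exists an open neighborhood U of A in X such that widim_ε(U,d) ≤ n. -/

import Mathlib

open scoped ENNReal

/-- An abstract finite simplicial complex on a vertex type `V`: a finite, downward closed
family of nonempty finite sets of vertices. -/
structure FinSimpComplex (V : Type) where
  faces : Finset (Finset V)
  nonempty_of_mem : ∀ s ∈ faces, s.Nonempty
  down_closed : ∀ s ∈ faces, ∀ t ⊆ s, t.Nonempty → t ∈ faces

namespace FinSimpComplex

/-- The geometric realization of `K`: the set of barycentric coordinate functions supported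
on a face of `K`. -/
def space {V : Type} [Fintype V] (K : FinSimpComplex V) : Set (V → ℝ) :=
  {x | (∀ v, 0 ≤ x v) ∧ (∑ v, x v = 1) ∧ ∃ s ∈ K.faces, ∀ v, x v ≠ 0 → v ∈ s}

/-- `K` has dimension at most `n`. -/
def dimLE {V : Type} (K : FinSimpComplex V) (n : ℕ) : Prop :=
  ∀ s ∈ K.faces, s.card ≤ n + 1

/-- The dimension of `K` (with value `0` for the empty complex). -/
def dim {V : Type} (K : FinSimpComplex V) : ℕ :=
  K.faces.sup fun s => s.card - 1

/-- The vertex set of `K`. -/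
def vertexSet {V : Type} [Fintype V] [DecidableEq V] (K : FinSimpComplex V) : Finset V :=
  Finset.univ.filter fun v => {v} ∈ K.faces

/-- The open star of the vertex `v` in the realization of `K`: the union of the interiors of
the simplices containing `v`, i.e. the points whose `v`-th barycentric coordinate is nonzero. -/
def star {V : Type} [Fintype V] (K : FinSimpComplex V) (v : V) : Set ↥K.space :=
  {x | (x : V → ℝ) v ≠ 0}

/-- The full subcomplex of `K` spanned by the vertex set `A`. -/
def fullSub {V : Type} [DecidableEq V] (K : FinSimpComplex V) (A : Finset V) :
    FinSimpComplex V where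
  faces := K.faces.filter fun s => s ⊆ A
  nonempty_of_mem s hs := K.nonempty_of_mem s (Finset.mem_filter.1 hs).1
  down_closed s hs t hts htne := Finset.mem_filter.2
    ⟨K.down_closed s (Finset.mem_filter.1 hs).1 t hts htne,
     hts.trans (Finset.mem_filter.1 hs).2⟩

end FinSimpComplex

/-- The diameter of a set with respect to a distance function `d`, valued in `ℝ≥0∞`. -/
noncomputable def diamOn {X : Type*} (d : X → X → ℝ) (S : Set X) : ℝ≥0∞ :=
  ⨆ x ∈ S, ⨆ y ∈ S, ENNReal.ofReal (d x y)

/-- `f` is an `ε`-embedding w.r.t. `d`: it is continuous and all its fibers have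
`d`-diameter `< ε`. -/
def IsEpsEmbedding {X P : Type*} [TopologicalSpace X] [TopologicalSpace P]
    (d : X → X → ℝ) (ε : ℝ) (f : X → P) : Prop :=
  Continuous f ∧ ∀ p : P, diamOn d (f ⁻¹' {p}) < ENNReal.ofReal ε

/-- The `ε`-width dimension of `X` w.r.t. `d`: the minimal integer `n ≥ 0` such that there is
an `ε`-embedding of `X` into some at most `n`-dimensional finite simplicial complex
(`⊤` if no such embedding exists). -/
noncomputable def widim (X : Type*) [TopologicalSpace X] (d : X → X → ℝ) (ε : ℝ) : ℝ≥0∞ :=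
  sInf {r : ℝ≥0∞ | ∃ n : ℕ, (n : ℝ≥0∞) = r ∧
    ∃ (k : ℕ) (K : FinSimpComplex (Fin k)) (f : X → ↥K.space),
      K.dimLE n ∧ IsEpsEmbedding d ε f}

/-- The dynamical distance `d_N(x,y) = max_{0 ≤ n < N} d(Tⁿx, Tⁿy)`. -/
noncomputable def dynDist {X : Type*} (d : X → X → ℝ) (T : X → X) (N : ℕ) (x y : X) : ℝ :=
  (Finset.range N).fold max 0 fun n => d (T^[n] x) (T^[n] y)

/-- The mean dimension `mdim(X,T) = lim_{ε→0} lim_{N→∞} widim_ε(X,d_N)/N`; the limit in `N`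
exists and equals the infimum by subadditivity, and the limit in `ε` is the supremum
by monotonicity. -/
noncomputable def mdim (X : Type*) [TopologicalSpace X] (d : X → X → ℝ) (T : X → X) : ℝ≥0∞ :=
  ⨆ (ε : ℝ) (_ : 0 < ε), ⨅ (N : ℕ) (_ : 0 < N), widim X (dynDist d T N) ε / (N : ℝ≥0∞)

/-- The relative mean dimension of a factor map `π`:
`mdim(π,T) = lim_{ε→0} lim_{N→∞} (sup_y widim_ε(π⁻¹(y), d_N))/N`. -/
noncomputable def mdimRel {X Y : Type*} [TopologicalSpace X] (d : X → X → ℝ)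
    (T : X → X) (π : X → Y) : ℝ≥0∞ :=
  ⨆ (ε : ℝ) (_ : 0 < ε), ⨅ (N : ℕ) (_ : 0 < N),
    (⨆ y : Y, widim ↥(π ⁻¹' {y}) (fun a b => dynDist d T N a.1 b.1) ε) / (N : ℝ≥0∞)

/-- The upper mean dimension of a subset `A ⊆ X`:
`lim_{ε→0} limsup_{N→∞} widim_ε(A,d_N)/N`. -/
noncomputable def umdim {X : Type*} [TopologicalSpace X] (d : X → X → ℝ) (T : X → X)
    (A : Set X) : ℝ≥0∞ :=
  ⨆ (ε : ℝ) (_ : 0 < ε),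
    Filter.limsup (fun N : ℕ =>
      widim ↥A (fun a b => dynDist d T N a.1 b.1) ε / (N : ℝ≥0∞)) Filter.atTop

/-- The lower mean dimension of a subset `A ⊆ X`:
`lim_{ε→0} liminf_{N→∞} widim_ε(A,d_N)/N`. -/
noncomputable def lmdim {X : Type*} [TopologicalSpace X] (d : X → X → ℝ) (T : X → X)
    (A : Set X) : ℝ≥0∞ :=
  ⨆ (ε : ℝ) (_ : 0 < ε),
    Filter.liminf (fun N : ℕ =>
      widim ↥A (fun a b => dynDist d T N a.1 b.1) ε / (N : ℝ≥0∞)) Filter.atTop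

/-- A factor map between dynamical systems: a continuous equivariant surjection. -/
structure IsFactorMap {X Y : Type*} [TopologicalSpace X] [TopologicalSpace Y]
    (T : X → X) (S : Y → Y) (π : X → Y) : Prop where
  continuous : Continuous π
  surjective : Function.Surjective π
  equivariant : ∀ x, π (T x) = S (π x)

/-- The orbit capacity `ocap(A) = lim_{N→∞} (1/N) sup_x Σ_{n<N} 1_A(Tⁿx)`; the limit exists
and equals the infimum by subadditivity. -/
noncomputable def ocap {X : Type*} (T : X → X) (A : Set X) : ℝ≥0∞ :=
  ⨅ (N : ℕ) (_ : 0 < N),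
    (⨆ x : X, ∑ n ∈ Finset.range N, A.indicator (fun _ => (1 : ℝ≥0∞)) (T^[n] x)) / (N : ℝ≥0∞)

/-- The small boundary property. -/
def SmallBoundaryProperty {Y : Type*} [TopologicalSpace Y] (S : Y → Y) : Prop :=
  ∀ y : Y, ∀ U : Set Y, IsOpen U → y ∈ U →
    ∃ V : Set Y, IsOpen V ∧ y ∈ V ∧ V ⊆ U ∧ ocap S (frontier V) = 0

/-- `d` is a metric on `X` compatible with the given topology. -/
def IsCompatibleMetric {X : Type*} [t : TopologicalSpace X] (d : X → X → ℝ) : Prop :=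
  ∃ m : MetricSpace X,
    m.toPseudoMetricSpace.toUniformSpace.toTopologicalSpace = t ∧
    ∀ x y, @dist X m.toPseudoMetricSpace.toDist x y = d x y
section Aux

open Metric

lemma le_diamOn {X : Type*} (d : X → X → ℝ) {S : Set X} {x y : X}
    (hx : x ∈ S) (hy : y ∈ S) : ENNReal.ofReal (d x y) ≤ diamOn d S := by
  have h1 : ENNReal.ofReal (d x y) ≤ ⨆ y' ∈ S, ENNReal.ofReal (d x y') :=
    le_iSup₂ (f := fun y' (_ : y' ∈ S) => ENNReal.ofReal (d x y')) y hy
  exact h1.trans (le_iSup₂ (f := fun x' (_ : x' ∈ S) =>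
    ⨆ y' ∈ S, ENNReal.ofReal (d x' y')) x hx)

lemma diamOn_le {X : Type*} {d : X → X → ℝ} {S : Set X} {C : ℝ≥0∞}
    (h : ∀ x ∈ S, ∀ y ∈ S, ENNReal.ofReal (d x y) ≤ C) : diamOn d S ≤ C :=
  iSup₂_le fun x hx => iSup₂_le fun y hy => h x hx y hy

variable {k : ℕ} (K : FinSimpComplex (Fin k))

lemma isClosed_space : IsClosed K.space := by
  have : K.space = ⋃ s ∈ K.faces, {x : Fin k → ℝ |
      (∀ v, 0 ≤ x v) ∧ (∑ v, x v = 1) ∧ ∀ v, x v ≠ 0 → v ∈ s} := by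
    ext x
    simp only [FinSimpComplex.space, Set.mem_setOf_eq, Set.mem_iUnion]
    tauto
  rw [this]
  refine isClosed_biUnion_finset fun s _ => ?_
  have h1 : IsClosed {x : Fin k → ℝ | ∀ v, 0 ≤ x v} := by
    rw [Set.setOf_forall]
    exact isClosed_iInter fun v => isClosed_le continuous_const (continuous_apply v)
  have h2 : IsClosed {x : Fin k → ℝ | ∑ v, x v = 1} :=
    isClosed_eq (continuous_finset_sum _ fun v _ => continuous_apply v) continuous_const
  have h3 : IsClosed {x : Fin k → ℝ | ∀ v, x v ≠ 0 → v ∈ s} := by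
    rw [Set.setOf_forall]
    refine isClosed_iInter fun v => ?_
    by_cases hv : v ∈ s
    · simp [hv]
    · have he : {x : Fin k → ℝ | x v ≠ 0 → v ∈ s} = {x : Fin k → ℝ | x v = 0} := by
        ext x; simp [hv]
      rw [he]
      exact isClosed_eq (continuous_apply v) continuous_const
  exact h1.inter (h2.inter h3)

noncomputable def cutFn (K : FinSimpComplex (Fin k)) (x : Fin k → ℝ) : Fin k → ℝ :=
  fun v => max (x v - 2 * infDist x K.space) 0

lemma cutFn_nonneg (x : Fin k → ℝ) (v : Fin k) : 0 ≤ cutFn K x v := le_max_right _ _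

lemma continuous_cutFn : Continuous (cutFn K) :=
  continuous_pi fun v => ((continuous_apply v).sub
    (continuous_const.mul (continuous_infDist_pt _))).max continuous_const

lemma cutFn_of_mem {x : Fin k → ℝ} (hx : x ∈ K.space) : cutFn K x = x := by
  funext v
  simp only [cutFn, infDist_zero_of_mem hx, mul_zero, sub_zero]
  exact max_eq_left (hx.1 v)

lemma cutFn_good (hne : K.space.Nonempty) {x : Fin k → ℝ}
    (hx : infDist x K.space < 1 / (8 * ((k : ℝ) + 1))) :
    ∃ s ∈ K.faces, (∀ v, cutFn K x v ≠ 0 → v ∈ s) ∧ (1 : ℝ) / 2 ≤ ∑ w, cutFn K x w := by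
  have hD0 : 0 ≤ infDist x K.space := infDist_nonneg
  rcases eq_or_lt_of_le hD0 with h0 | hpos
  · have hxm : x ∈ K.space := ((isClosed_space K).mem_iff_infDist_zero hne).2 h0.symm
    obtain ⟨hnn, hsum, s, hs, hsupp⟩ := hxm
    refine ⟨s, hs, ?_, ?_⟩
    · intro v hv
      apply hsupp
      intro h'
      exact hv (by simp [cutFn, ← h0, h'])
    · have : ∑ w, cutFn K x w = 1 := by
        rw [cutFn_of_mem K ⟨hnn, hsum, s, hs, hsupp⟩]; exact hsum
      rw [this]; norm_num
  · set D := infDist x K.space with hD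
    obtain ⟨y, hy, hxy⟩ := (infDist_lt_iff hne).1 (show infDist x K.space < 2 * D by
      rw [← hD]; linarith)
    obtain ⟨hynn, hysum, s, hs, hysupp⟩ := hy
    have hcard : (s.card : ℝ) ≤ (k : ℝ) := by
      have := (Finset.card_le_card s.subset_univ).trans_eq (by simp : (Finset.univ : Finset (Fin k)).card = k)
      exact_mod_cast this
    refine ⟨s, hs, ?_, ?_⟩
    · intro v hv
      by_contra hvs
      have hyv : y v = 0 := by
        by_contra h'; exact hvs (hysupp v h')
      have h1 : x v ≤ dist x y := by
        have h2 := dist_le_pi_dist x y v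
        rw [Real.dist_eq, hyv, sub_zero] at h2
        exact (le_abs_self _).trans h2
      exact hv (max_eq_right (by rw [← hD]; linarith))
    · have key : ∀ w ∈ s, y w - 4 * D ≤ cutFn K x w := by
        intro w _
        have h2 := dist_le_pi_dist x y w
        rw [Real.dist_eq] at h2
        have h3 : y w - dist x y ≤ x w := by
          have := neg_abs_le (x w - y w)
          linarith
        calc y w - 4 * D ≤ x w - 2 * D := by linarith
        _ ≤ cutFn K x w := le_max_left _ _
      have hys : ∑ w ∈ s, y w = 1 := by
        rw [← hysum]
        exact Finset.sum_subset s.subset_univ fun w _ hws => by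
          by_contra h'; exact hws (hysupp w h')
      have hsums : ∑ w ∈ s, (y w - 4 * D) ≤ ∑ w ∈ s, cutFn K x w :=
        Finset.sum_le_sum key
      have heq : ∑ w ∈ s, (y w - 4 * D) = 1 - s.card * (4 * D) := by
        rw [Finset.sum_sub_distrib, hys, Finset.sum_const, nsmul_eq_mul]
      have hle : ∑ w ∈ s, cutFn K x w ≤ ∑ w, cutFn K x w :=
        Finset.sum_le_sum_of_subset_of_nonneg s.subset_univ
          fun w _ _ => cutFn_nonneg K x w
      have hkpos : (0 : ℝ) < (k : ℝ) + 1 := by positivity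
      have h4 : (s.card : ℝ) * (4 * D) ≤ ((k : ℝ) + 1) * (4 * D) :=
        mul_le_mul_of_nonneg_right (by linarith) (by linarith)
      have h5 : ((k : ℝ) + 1) * (4 * D) ≤ ((k : ℝ) + 1) * (4 * (1 / (8 * ((k : ℝ) + 1)))) :=
        mul_le_mul_of_nonneg_left (by linarith) (by linarith)
      have h6 : ((k : ℝ) + 1) * (4 * (1 / (8 * ((k : ℝ) + 1)))) = 1 / 2 := by
        field_simp
        ring
      linarith

noncomputable def retFn (K : FinSimpComplex (Fin k)) (x : Fin k → ℝ) : Fin k → ℝ :=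
  fun v => cutFn K x v / ∑ w, cutFn K x w

lemma retFn_mem (hne : K.space.Nonempty) {x : Fin k → ℝ}
    (hx : infDist x K.space < 1 / (8 * ((k : ℝ) + 1))) : retFn K x ∈ K.space := by
  obtain ⟨s, hs, hsupp, hsum⟩ := cutFn_good K hne hx
  have hSpos : (0 : ℝ) < ∑ w, cutFn K x w := lt_of_lt_of_le (by norm_num) hsum
  refine ⟨fun v => div_nonneg (cutFn_nonneg K x v) hSpos.le, ?_, s, hs, ?_⟩
  · have he : ∑ v, retFn K x v = (∑ v, cutFn K x v) / ∑ w, cutFn K x w := by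
      rw [Finset.sum_div]; rfl
    rw [he, div_self hSpos.ne']
  · intro v hv
    refine hsupp v fun h0 => hv ?_
    simp [retFn, h0]

lemma retFn_of_mem {x : Fin k → ℝ} (hx : x ∈ K.space) : retFn K x = x := by
  funext v
  simp [retFn, cutFn_of_mem K hx, hx.2.1]

lemma continuousOn_retFn (hne : K.space.Nonempty) :
    ContinuousOn (retFn K) {x | infDist x K.space < 1 / (8 * ((k : ℝ) + 1))} := by
  have hc : Continuous fun x => ∑ w, cutFn K x w :=
    continuous_finset_sum _ fun w _ => (continuous_apply w).comp (continuous_cutFn K)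
  refine continuousOn_pi.2 fun v => ContinuousOn.div
    (((continuous_apply v).comp (continuous_cutFn K)).continuousOn) hc.continuousOn ?_
  intro x hx
  obtain ⟨s, hs, hsupp, hsum⟩ := cutFn_good K hne hx
  exact ne_of_gt (lt_of_lt_of_le (by norm_num) hsum)

end Aux

/-- **Claim 2.3.** Let `(X,d)` be a compact metric space, `A ⊆ X` closed, `ε > 0` and `n ≥ 0`.
If `widim_ε(A,d) ≤ n` then there is an open neighborhood `U` of `A` with `widim_ε(U,d) ≤ n`. -/
theorem widim_open_neighborhood {X : Type*} [MetricSpace X] [CompactSpace X]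
    (A : Set X) (hA : IsClosed A) (ε : ℝ) (hε : 0 < ε) (n : ℕ)
    (h : widim ↥A (fun a b => dist (a : X) (b : X)) ε ≤ (n : ℝ≥0∞)) :
    ∃ U : Set X, IsOpen U ∧ A ⊆ U ∧
      widim ↥U (fun a b => dist (a : X) (b : X)) ε ≤ (n : ℝ≥0∞) := by
  classical
  rcases Set.eq_empty_or_nonempty A with rfl | ⟨a₀, ha₀⟩
  · refine ⟨∅, isOpen_empty, subset_rfl, ?_⟩
    refine sInf_le ⟨n, rfl, 0, ⟨∅, by simp, by simp⟩,
      fun x => absurd x.2 (Set.notMem_empty _), fun s hs => absurd hs (by simp), ?_, ?_⟩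
    · exact continuous_iff_continuousAt.2 fun x => absurd x.2 (Set.notMem_empty _)
    · intro p
      have he : (fun x : ↥(∅ : Set X) => absurd x.2 (Set.notMem_empty _)) ⁻¹' {p} = ∅ :=
        Set.eq_empty_of_isEmpty _
      rw [he]
      simp only [diamOn, Set.mem_empty_iff_false, not_false_eq_true, iSup_neg, iSup_bot]
      exact ENNReal.ofReal_pos.2 hε
  · -- main case
    have h1 : widim ↥A (fun a b => dist (a : X) (b : X)) ε < (n : ℝ≥0∞) + 1 :=
      h.trans_lt (ENNReal.lt_add_right (ENNReal.natCast_ne_top n) one_ne_zero)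
    rw [widim] at h1
    obtain ⟨r, hrS, hrlt⟩ := sInf_lt_iff.1 h1
    obtain ⟨m, hm, k, K, f, hdim, hfc, hfib⟩ := hrS
    rw [← hm] at hrlt
    have hmn : m ≤ n := by
      have : (m : ℝ≥0∞) < ((n + 1 : ℕ) : ℝ≥0∞) := by push_cast; exact hrlt
      exact Nat.lt_succ_iff.1 (by exact_mod_cast this)
    have hdimn : K.dimLE n := fun s hs => (hdim s hs).trans (by omega)
    -- Tietze extension
    have hcoe : Continuous fun a : ↥A => (f a : Fin k → ℝ) :=
      continuous_subtype_val.comp hfc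
    obtain ⟨g, hg⟩ := (⟨fun a : ↥A => (f a : Fin k → ℝ), hcoe⟩ :
      C(↥A, Fin k → ℝ)).exists_restrict_eq hA
    have hgA : ∀ a : ↥A, g a.1 = (f a : Fin k → ℝ) := fun a => by
      have := DFunLike.congr_fun hg a
      simpa using this
    have hne : K.space.Nonempty := ⟨(f ⟨a₀, ha₀⟩ : Fin k → ℝ), (f ⟨a₀, ha₀⟩).2⟩
    set η : ℝ := 1 / (8 * ((k : ℝ) + 1)) with hη
    have hηpos : 0 < η := by positivity
    set O : Set X := {x | Metric.infDist (g x) K.space < η} with hO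
    have hOopen : IsOpen O :=
      isOpen_lt ((Metric.continuous_infDist_pt _).comp g.continuous) continuous_const
    have hAO : A ⊆ O := by
      intro a ha
      show Metric.infDist (g a) K.space < η
      rw [show g a = (f ⟨a, ha⟩ : Fin k → ℝ) from hgA ⟨a, ha⟩,
        Metric.infDist_zero_of_mem (f ⟨a, ha⟩).2]
      exact hηpos
    set F : X → Fin k → ℝ := fun x => retFn K (g x) with hF
    have hFA : ∀ a (ha : a ∈ A), F a = (f ⟨a, ha⟩ : Fin k → ℝ) := by
      intro a ha
      show retFn K (g a) = _
      rw [hgA ⟨a, ha⟩, retFn_of_mem K (f ⟨a, ha⟩).2]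
    have hFcont : ∀ x ∈ O, ContinuousAt F x := by
      intro x hx
      have hset : IsOpen {y : Fin k → ℝ | Metric.infDist y K.space < η} :=
        isOpen_lt (Metric.continuous_infDist_pt _) continuous_const
      have h1 : ContinuousAt (retFn K) (g x) :=
        (continuousOn_retFn K hne).continuousAt (hset.mem_nhds hx)
      exact h1.comp g.continuous.continuousAt
    -- the good open set Ω in X × X
    set Ω : Set (X × X) :=
      {p | p.1 ∈ O ∧ p.2 ∈ O ∧ (F p.1 = F p.2 → dist p.1 p.2 < ε)} with hΩ
    have hΩopen : IsOpen Ω := by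
      rw [isOpen_iff_mem_nhds]
      rintro ⟨x, y⟩ ⟨hx, hy, himp⟩
      have hOO : O ×ˢ O ∈ nhds (x, y) :=
        prod_mem_nhds (hOopen.mem_nhds hx) (hOopen.mem_nhds hy)
      by_cases hd : dist x y < ε
      · have hdset : {p : X × X | dist p.1 p.2 < ε} ∈ nhds (x, y) :=
          (isOpen_lt continuous_dist continuous_const).mem_nhds hd
        filter_upwards [hOO, hdset] with p hp1 hp2
        exact ⟨hp1.1, hp1.2, fun _ => hp2⟩
      · have hne' : F x ≠ F y := fun he => hd (himp he)
        have h1 : ContinuousAt (fun p : X × X => F p.1) (x, y) :=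
          ContinuousAt.comp (g := F) (hFcont x hx) continuousAt_fst
        have h2 : ContinuousAt (fun p : X × X => F p.2) (x, y) :=
          ContinuousAt.comp (g := F) (hFcont y hy) continuousAt_snd
        have hneq : {p : X × X | F p.1 ≠ F p.2} ∈ nhds (x, y) :=
          (ContinuousAt.prodMk h1 h2) ((isClosed_diagonal.isOpen_compl).mem_nhds hne')
        filter_upwards [hOO, hneq] with p hp1 hp2
        exact ⟨hp1.1, hp1.2, fun he => absurd he hp2⟩
    have hAAΩ : A ×ˢ A ⊆ Ω := by
      rintro ⟨x, y⟩ ⟨hxA, hyA⟩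
      refine ⟨hAO hxA, hAO hyA, fun he => ?_⟩
      rw [hFA x hxA, hFA y hyA] at he
      have hfe : f ⟨x, hxA⟩ = f ⟨y, hyA⟩ := Subtype.coe_injective he
      have hmem1 : (⟨x, hxA⟩ : ↥A) ∈ f ⁻¹' {f ⟨y, hyA⟩} := by
        simp [Set.mem_preimage, hfe]
      have hmem2 : (⟨y, hyA⟩ : ↥A) ∈ f ⁻¹' {f ⟨y, hyA⟩} := by
        simp [Set.mem_preimage]
      have hd1 := (le_diamOn (fun a b : ↥A => dist (a : X) (b : X)) hmem1 hmem2).trans_lt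
        (hfib (f ⟨y, hyA⟩))
      exact (ENNReal.ofReal_lt_ofReal_iff_of_nonneg dist_nonneg).1 hd1
    obtain ⟨δ, hδpos, hδ⟩ :=
      (hA.isCompact.prod hA.isCompact).exists_thickening_subset_open hΩopen hAAΩ
    set U : Set X := Metric.thickening (δ / 2) A with hU
    have hUopen : IsOpen U := Metric.isOpen_thickening
    have hAU : A ⊆ U := Metric.self_subset_thickening (by linarith) A
    have hclU : closure U ⊆ Metric.thickening δ A :=
      (Metric.closure_thickening_subset_cthickening _ _).trans
        (Metric.cthickening_subset_thickening' hδpos (by linarith) A)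
    have hthick2 : ∀ x y : X, x ∈ Metric.thickening δ A → y ∈ Metric.thickening δ A →
        (x, y) ∈ Ω := by
      intro x y hx hy
      obtain ⟨a, haA, hxa⟩ := Metric.mem_thickening_iff.1 hx
      obtain ⟨b, hbA, hyb⟩ := Metric.mem_thickening_iff.1 hy
      refine hδ (Metric.mem_thickening_iff.2 ⟨(a, b), Set.mk_mem_prod haA hbA, ?_⟩)
      rw [Prod.dist_eq]
      exact max_lt hxa hyb
    have hclUΩ : ∀ x ∈ closure U, ∀ y ∈ closure U, (x, y) ∈ Ω :=
      fun x hx y hy => hthick2 x y (hclU hx) (hclU hy)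
    have hclUO : closure U ⊆ O := fun x hx => (hclUΩ x hx x hx).1
    -- the compact set of equal-value pairs
    set D : Set (X × X) :=
      {p | p.1 ∈ closure U ∧ p.2 ∈ closure U ∧ F p.1 = F p.2} with hD
    have hDclosed : IsClosed D := by
      rw [← isOpen_compl_iff, isOpen_iff_mem_nhds]
      rintro ⟨x, y⟩ hp
      by_cases hxy : x ∈ closure U ∧ y ∈ closure U
      · have hne' : F x ≠ F y := fun he => hp ⟨hxy.1, hxy.2, he⟩
        have h1 : ContinuousAt (fun p : X × X => F p.1) (x, y) :=
          ContinuousAt.comp (g := F) (hFcont x (hclUO hxy.1)) continuousAt_fst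
        have h2 : ContinuousAt (fun p : X × X => F p.2) (x, y) :=
          ContinuousAt.comp (g := F) (hFcont y (hclUO hxy.2)) continuousAt_snd
        have hneq : {p : X × X | F p.1 ≠ F p.2} ∈ nhds (x, y) :=
          (ContinuousAt.prodMk h1 h2) ((isClosed_diagonal.isOpen_compl).mem_nhds hne')
        filter_upwards [hneq] with p hp2 hpD
        exact hp2 hpD.2.2
      · have hopen : IsOpen ((closure U ×ˢ closure U)ᶜ : Set (X × X)) :=
          (isClosed_closure.prod isClosed_closure).isOpen_compl
        have hmem : (x, y) ∈ ((closure U ×ˢ closure U)ᶜ : Set (X × X)) := by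
          simpa [Set.mem_prod] using hxy
        filter_upwards [hopen.mem_nhds hmem] with p hp2 hpD
        exact hp2 ⟨hpD.1, hpD.2.1⟩
    have hDcompact : IsCompact D := hDclosed.isCompact
    have hDne : D.Nonempty :=
      ⟨(a₀, a₀), subset_closure (hAU ha₀), subset_closure (hAU ha₀), rfl⟩
    obtain ⟨p₀, hp₀D, hp₀max⟩ := hDcompact.exists_isMaxOn hDne
      (continuous_dist.continuousOn :
        ContinuousOn (fun p : X × X => dist p.1 p.2) D)
    set c : ℝ := dist p₀.1 p₀.2 with hc
    have hcε : c < ε := (hclUΩ _ hp₀D.1 _ hp₀D.2.1).2.2 hp₀D.2.2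
    have hbound : ∀ p ∈ D, dist p.1 p.2 ≤ c := fun p hp => hp₀max hp
    -- assemble
    refine ⟨U, hUopen, hAU, ?_⟩
    have hmemU : ∀ u : ↥U, Metric.infDist (g u.1) K.space < η :=
      fun u => hclUO (subset_closure u.2)
    refine sInf_le ⟨n, rfl, k, K,
      fun u => ⟨F u.1, retFn_mem K hne (hmemU u)⟩, hdimn, ?_, ?_⟩
    · refine Continuous.subtype_mk ?_ _
      exact continuous_iff_continuousAt.2 fun u =>
        (hFcont u.1 (hclUO (subset_closure u.2))).comp continuous_subtype_val.continuousAt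
    · intro p
      refine lt_of_le_of_lt (diamOn_le ?_) ((ENNReal.ofReal_lt_ofReal_iff hε).2 hcε)
      intro u hu w hw
      simp only [Set.mem_preimage, Set.mem_singleton_iff] at hu hw
      have hFu : F u.1 = F w.1 := by
        have h1 : (⟨F u.1, retFn_mem K hne (hmemU u)⟩ : ↥K.space) = p := hu
        have h2 : (⟨F w.1, retFn_mem K hne (hmemU w)⟩ : ↥K.space) = p := hw
        rw [← h2] at h1
        exact congrArg Subtype.val h1
      exact ENNReal.ofReal_le_ofReal
        (hbound (u.1, w.1) ⟨subset_closure u.2, subset_closure w.2, hFu⟩)
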